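/- Let λ > 0 be a real number with λ ≠ 1 and let h : ℝ → ℝ be continuous with h(t + 1) = h(t) for all t. Then there exists exactly one differentiable function f : ℝ → ℝ such that f(t + 1) = f(t) for all t ∈ ℝ and f′(t) + (log λ) · f(t) = h(t) for all t ∈ ℝ. -/

import Mathlib

/-- For `λ > 0`, `λ ≠ 1` and continuous 1-periodic `h`, there is exactly one
differentiable 1-periodic `f` with `f' + (log λ) f = h`. -/
theorem stmt12 (l : ℝ) (hl : 0 < l) (hl1 : l ≠ 1)
    (h : ℝ → ℝ) (hc : Continuous h) (hper : ∀ t, h (t + 1) = h t) :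
    ∃! f : ℝ → ℝ, Differentiable ℝ f ∧
      (∀ t, f (t + 1) = f t) ∧
      (∀ t, deriv f t + Real.log l * f t = h t) := by
  set a : ℝ := Real.log l with ha_def
  have ha : a ≠ 0 := by
    intro h0
    have := Real.exp_log hl
    rw [ha_def] at h0
    rw [h0, Real.exp_zero] at this
    exact hl1 this.symm
  have hea : Real.exp a ≠ 1 := by
    intro h1
    apply ha
    have := Real.exp_injective (by rw [h1, Real.exp_zero] : Real.exp a = Real.exp 0)
    exact this
  have hea' : Real.exp a - 1 ≠ 0 := sub_ne_zero.mpr hea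
  set E : ℝ → ℝ := fun s => Real.exp (a * s) * h s with hE_def
  have hE : Continuous E := (Real.continuous_exp.comp (continuous_const.mul continuous_id)).mul hc
  set g : ℝ → ℝ := fun t => ∫ s in (0:ℝ)..t, E s with hg_def
  have hg : ∀ t, HasDerivAt g (E t) t := by
    intro t
    exact intervalIntegral.integral_hasDerivAt_right (hE.intervalIntegrable 0 t)
      (hE.stronglyMeasurableAtFilter _ _) hE.continuousAt
  set C : ℝ := g 1 / (Real.exp a - 1) with hC_def
  set f : ℝ → ℝ := fun t => Real.exp (-(a * t)) * (C + g t) with hf_def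
  -- derivative of f
  have hexp : ∀ t : ℝ, HasDerivAt (fun t : ℝ => Real.exp (-(a * t)))
      (-a * Real.exp (-(a * t))) t := by
    intro t
    have h1 : HasDerivAt (fun t : ℝ => -(a * t)) (-a) t := by
      simpa [Pi.neg_def] using ((hasDerivAt_id t).const_mul a).neg
    simpa [Function.comp_def, mul_comm] using (Real.hasDerivAt_exp (-(a * t))).comp t h1
  have hfd : ∀ t, HasDerivAt f (-a * f t + h t) t := by
    intro t
    have h2 : HasDerivAt (fun t => C + g t) (E t) t := (hg t).const_add C
    have h3 := (hexp t).mul h2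
    have hmul : Real.exp (-(a * t)) * Real.exp (a * t) = 1 := by
      rw [← Real.exp_add]; simp
    have hval : -a * Real.exp (-(a * t)) * (C + g t) + Real.exp (-(a * t)) * E t
        = -a * f t + h t := by
      have hE2 : Real.exp (-(a * t)) * E t = h t := by
        simp only [hE_def]; rw [← mul_assoc, hmul, one_mul]
      rw [hE2]; simp only [hf_def]; ring
    exact hval ▸ h3
  have hf_diff : Differentiable ℝ f := fun t => (hfd t).differentiableAt
  have hf_deriv : ∀ t, deriv f t = -a * f t + h t := fun t => (hfd t).deriv
  -- periodicity
  have hfper : ∀ t, f (t + 1) = f t := by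
    have key : ∀ t, C + g (t + 1) = Real.exp a * (C + g t) := by
      set D : ℝ → ℝ := fun t => (C + g (t + 1)) - Real.exp a * (C + g t) with hD_def
      have hD : ∀ t, HasDerivAt D 0 t := by
        intro t
        have h1 : HasDerivAt (fun t => g (t + 1)) (E (t + 1)) t := by
          have := HasDerivAt.comp t (hg (t + 1)) ((hasDerivAt_id t).add_const 1)
          simpa [Function.comp_def] using this
        have h2 := ((h1.const_add C).sub (((hg t).const_add C).const_mul (Real.exp a)))
        refine h2.congr_deriv ?_
        simp only [hE_def]
        rw [hper t, show a * (t + 1) = a + a * t by ring, Real.exp_add]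
        ring
      have hDc : ∀ t, D t = D 0 := by
        intro t
        exact is_const_of_deriv_eq_zero (fun x => (hD x).differentiableAt)
          (fun x => (hD x).deriv) t 0
      have hD0 : D 0 = 0 := by
        simp only [hD_def]
        have hg0 : g 0 = 0 := intervalIntegral.integral_same
        rw [zero_add, hg0, add_zero, hC_def]
        field_simp
        ring
      intro t
      have := hDc t
      rw [hD0] at this
      simp only [hD_def] at this
      linarith
    intro t
    simp only [hf_def]
    rw [key t, show -(a * (t + 1)) = -(a*t) + -a by ring, Real.exp_add]
    rw [show Real.exp (-(a*t)) * Real.exp (-a) * (Real.exp a * (C + g t))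
        = (Real.exp (-a) * Real.exp a) * (Real.exp (-(a*t)) * (C + g t)) by ring,
      ← Real.exp_add]
    simp
  refine ⟨f, ⟨hf_diff, hfper, fun t => by rw [hf_deriv t]; ring⟩, ?_⟩
  rintro q ⟨hqd, hqp, hqe⟩
  funext t
  -- w s := exp(a s) * (q s - f s) is constant
  set w : ℝ → ℝ := fun s => Real.exp (a * s) * (q s - f s) with hw_def
  have hqd' : ∀ s, HasDerivAt q (h s - a * q s) s := by
    intro s
    have := (hqd s).hasDerivAt
    have heq : deriv q s = h s - a * q s := by
      have := hqe s; linarith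
    rwa [heq] at this
  have hexp' : ∀ s : ℝ, HasDerivAt (fun s : ℝ => Real.exp (a * s))
      (a * Real.exp (a * s)) s := by
    intro s
    have h1 : HasDerivAt (fun s : ℝ => a * s) a s := by
      simpa using (hasDerivAt_id s).const_mul a
    simpa [Function.comp_def, mul_comm] using (Real.hasDerivAt_exp (a * s)).comp s h1
  have hw : ∀ s, HasDerivAt w 0 s := by
    intro s
    have h1 := (hexp' s).mul ((hqd' s).sub (hfd s))
    refine h1.congr_deriv ?_
    simp only [Pi.sub_apply]
    ring
  have hwc : ∀ s, w s = w 0 := fun s =>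
    is_const_of_deriv_eq_zero (fun x => (hw x).differentiableAt) (fun x => (hw x).deriv) s 0
  have hw0 : w 0 = 0 := by
    have h1 := hwc 1
    have hq1 : q (0 + 1) = q 0 := hqp 0
    have hf1 : f (0 + 1) = f 0 := hfper 0
    rw [zero_add] at hq1 hf1
    simp only [hw_def, mul_one, mul_zero, Real.exp_zero, one_mul] at h1 ⊢
    rw [hq1, hf1] at h1
    have : (Real.exp a - 1) * (q 0 - f 0) = 0 := by linarith
    rcases mul_eq_zero.mp this with h | h
    · exact absurd h hea'
    · linarith
  have := hwc t
  rw [hw0] at this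
  simp only [hw_def] at this
  have hne : Real.exp (a * t) ≠ 0 := Real.exp_ne_zero _
  have := mul_eq_zero.mp this
  rcases this with h' | h'
  · exact absurd h' hne
  · linarith
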